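/- arXiv:2205.01328 — 7 statements merged into one kernel-verified Lean document; each statement's English description precedes it below -/
import Mathlib

section
/- For any square matrix A of size N over the complex numbers, the permanent of A equals (-1)^N times the sum over all subsets S of {1,...,N} of (-1)^{|S|} times the product over j from 1 to N of the sum over k in S of A_{jk} (Ryser's formula). -/
open Finset BigOperators

/-- The permanent of a square matrix. -/
noncomputable def perm {n : Type*} [Fintype n] [DecidableEq n] (A : Matrix n n ℂ) : ℂ :=
  ∑ σ : Equiv.Perm n, ∏ j, A j (σ j)

lemma sum_powerset_neg_one_pow_card_C {α : Type*} [DecidableEq α] {x : Finset α} :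
    (∑ m ∈ x.powerset, (-1 : ℂ) ^ m.card) = if x = ∅ then 1 else 0 := by
  have := Finset.sum_powerset_neg_one_pow_card (x := x)
  have h : ((∑ m ∈ x.powerset, (-1 : ℤ) ^ m.card : ℤ) : ℂ)
      = ∑ m ∈ x.powerset, (-1 : ℂ) ^ m.card := by push_cast; ring_nf
  rw [← h, this]
  split <;> norm_num

lemma key_sum {N : ℕ} (T : Finset (Fin N)) :
    (∑ S : Finset (Fin N), (if T ⊆ S then ((-1 : ℂ) ^ S.card) else 0))
      = if T = Finset.univ then (-1 : ℂ) ^ N else 0 := by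
  classical
  have hbij : Function.Bijective (fun S : Finset (Fin N) => Sᶜ) :=
    Function.Involutive.bijective (fun S => compl_compl S)
  rw [← Fintype.sum_bijective _ hbij _ _ (fun S => rfl)]
  have hcond : ∀ S : Finset (Fin N), (T ⊆ Sᶜ) ↔ (S ∈ Tᶜ.powerset) := by
    intro S
    rw [Finset.mem_powerset, Finset.subset_compl_comm]
  have hcard : ∀ S : Finset (Fin N), ((-1 : ℂ) ^ (Sᶜ).card) = (-1 : ℂ) ^ N * (-1 : ℂ) ^ S.card := by
    intro S
    have h1 : Sᶜ.card + S.card = N := by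
      rw [Finset.card_compl]
      have := Finset.card_le_univ S
      simp only [Fintype.card_fin] at *
      omega
    have : (-1 : ℂ) ^ (Sᶜ.card + S.card) = (-1 : ℂ) ^ N := by rw [h1]
    rw [pow_add] at this
    calc (-1 : ℂ) ^ (Sᶜ).card = (-1 : ℂ) ^ (Sᶜ).card * ((-1 : ℂ) ^ S.card * (-1 : ℂ) ^ S.card) := by
          rw [← pow_add, ← two_mul, pow_mul]; norm_num
      _ = (-1 : ℂ) ^ N * (-1 : ℂ) ^ S.card := by rw [← mul_assoc, this]
  calc (∑ S : Finset (Fin N), (if T ⊆ Sᶜ then ((-1 : ℂ) ^ (Sᶜ).card) else 0))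
      = ∑ S : Finset (Fin N), (if S ∈ Tᶜ.powerset then (-1 : ℂ) ^ N * (-1 : ℂ) ^ S.card else 0) := by
        apply Finset.sum_congr rfl
        intro S _
        rw [hcard]
        by_cases h : T ⊆ Sᶜ
        · rw [if_pos h, if_pos ((hcond S).mp h)]
        · rw [if_neg h, if_neg (fun hc => h ((hcond S).mpr hc))]
    _ = (-1 : ℂ) ^ N * ∑ S ∈ Tᶜ.powerset, (-1 : ℂ) ^ S.card := by
        rw [Finset.mul_sum, Finset.sum_ite_mem, Finset.univ_inter]
    _ = if T = Finset.univ then (-1 : ℂ) ^ N else 0 := by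
        rw [sum_powerset_neg_one_pow_card_C]
        by_cases h : T = Finset.univ
        · simp [h]
        · have : Tᶜ ≠ ∅ := by
            intro hc
            exact h (by simpa [Finset.compl_eq_empty_iff] using hc)
          simp [h, this]

/-- Ryser's formula for the permanent. -/
theorem ryser_formula (N : ℕ) (hN : 1 ≤ N) (A : Matrix (Fin N) (Fin N) ℂ) :
    perm A =
      (-1 : ℂ) ^ N *
        ∑ S : Finset (Fin N), (-1 : ℂ) ^ S.card * ∏ j : Fin N, ∑ k ∈ S, A j k := by
  classical
  have step1 : ∀ S : Finset (Fin N),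
      (∏ j : Fin N, ∑ k ∈ S, A j k)
        = ∑ f ∈ Fintype.piFinset (fun _ : Fin N => S), ∏ j, A j (f j) :=
    fun S => Finset.prod_univ_sum _ _
  have main :
      (∑ S : Finset (Fin N), (-1 : ℂ) ^ S.card * ∏ j : Fin N, ∑ k ∈ S, A j k)
        = (-1 : ℂ) ^ N * perm A := by
    calc (∑ S : Finset (Fin N), (-1 : ℂ) ^ S.card * ∏ j : Fin N, ∑ k ∈ S, A j k)
        = ∑ S : Finset (Fin N), ∑ f : Fin N → Fin N,
            (if Finset.image f Finset.univ ⊆ S then (-1 : ℂ) ^ S.card * ∏ j, A j (f j) else 0) := by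
          apply Finset.sum_congr rfl
          intro S _
          rw [step1, Finset.mul_sum]
          rw [show (Fintype.piFinset (fun _ : Fin N => S))
              = Finset.univ.filter (fun f : Fin N → Fin N => Finset.image f Finset.univ ⊆ S) by
            ext f
            simp [Fintype.mem_piFinset, Finset.image_subset_iff]]
          rw [Finset.sum_filter]
      _ = ∑ f : Fin N → Fin N, ∑ S : Finset (Fin N),
            (if Finset.image f Finset.univ ⊆ S then (-1 : ℂ) ^ S.card * ∏ j, A j (f j) else 0) :=
          Finset.sum_comm
      _ = ∑ f : Fin N → Fin N,
            (if Finset.image f Finset.univ = Finset.univ then (-1 : ℂ) ^ N * ∏ j, A j (f j)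
             else 0) := by
          apply Finset.sum_congr rfl
          intro f _
          have : (∑ S : Finset (Fin N),
              (if Finset.image f Finset.univ ⊆ S then (-1 : ℂ) ^ S.card * ∏ j, A j (f j) else 0))
              = (∑ S : Finset (Fin N),
                (if Finset.image f Finset.univ ⊆ S then (-1 : ℂ) ^ S.card else 0))
                * ∏ j, A j (f j) := by
            rw [Finset.sum_mul]
            apply Finset.sum_congr rfl
            intro S _
            split <;> simp
          rw [this, key_sum]
          split <;> simp
      _ = ∑ f ∈ Finset.univ.filter (fun f : Fin N → Fin N => Function.Bijective f),
            (-1 : ℂ) ^ N * ∏ j, A j (f j) := by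
          rw [Finset.sum_filter]
          apply Finset.sum_congr rfl
          intro f _
          congr 1
          rw [eq_iff_iff]
          constructor
          · intro h
            have hs : Function.Surjective f := by
              intro y
              have : y ∈ Finset.image f Finset.univ := by rw [h]; exact Finset.mem_univ y
              obtain ⟨x, _, hx⟩ := Finset.mem_image.mp this
              exact ⟨x, hx⟩
            exact Finite.surjective_iff_bijective.mp hs
          · intro h
            apply Finset.eq_univ_of_forall
            intro y
            obtain ⟨x, hx⟩ := h.2 y
            exact Finset.mem_image.mpr ⟨x, Finset.mem_univ x, hx⟩
      _ = (-1 : ℂ) ^ N * perm A := by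
          rw [← Finset.mul_sum, perm]
          congr 1
          refine Finset.sum_bij'
            (i := fun (f : Fin N → Fin N) hf =>
              Equiv.ofBijective f (Finset.mem_filter.mp hf).2)
            (j := fun (σ : Equiv.Perm (Fin N)) _ => ⇑σ)
            ?_ ?_ ?_ ?_ ?_
          · intro f hf; exact Finset.mem_univ _
          · intro σ _
            exact Finset.mem_filter.mpr ⟨Finset.mem_univ _, σ.bijective⟩
          · intro f hf; rfl
          · intro σ _; ext x; rfl
          · intro f hf; rfl
  rw [main, ← mul_assoc, ← pow_add, ← two_mul, pow_mul]
  norm_num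
end

section
/- For any N×N complex matrix A with N ≥ 1, Per(A) = 2^{-N} Σ_{x ∈ {-1,1}^N} (Π_{k=1}^N x_k)(Π_{j=1}^N Σ_{k=1}^N A_{jk} x_k) (Glynn's formula). -/
open Finset BigOperators

/-- A sign vector `x ∈ {-1,1}^N`, encoded by a Boolean vector. -/
def sgn (b : Bool) : ℂ := if b then 1 else -1

lemma sum_sgn_pow (m : ℕ) :
    (∑ b : Bool, sgn b ^ (m + 1)) = if Odd m then 2 else 0 := by
  rcases Nat.even_or_odd m with h | h
  · rw [if_neg (by simpa using h)]
    simp [sgn, Fintype.sum_bool, (Even.add_one h).neg_one_pow]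
  · rw [if_pos h]
    have : Even (m + 1) := h.add_one
    simp [sgn, Fintype.sum_bool, this.neg_one_pow]

/-- The sign-sum attached to a function `f`. -/
lemma sign_sum_eq (N : ℕ) (f : Fin N → Fin N) :
    (∑ x : Fin N → Bool, (∏ k, sgn (x k)) * ∏ j, sgn (x (f j)))
      = if Function.Bijective f then (2 : ℂ) ^ N else 0 := by
  classical
  set m : Fin N → ℕ := fun k => (univ.filter (fun j => f j = k)).card with hm
  have h1 : ∀ x : Fin N → Bool,
      (∏ k, sgn (x k)) * ∏ j, sgn (x (f j)) = ∏ k, sgn (x k) ^ (m k + 1) := by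
    intro x
    have := Finset.prod_fiberwise' (univ : Finset (Fin N)) f (fun k => sgn (x k))
    rw [← this, ← prod_mul_distrib]
    refine prod_congr rfl fun k _ => ?_
    rw [Finset.prod_const, pow_succ, mul_comm]
  calc (∑ x : Fin N → Bool, (∏ k, sgn (x k)) * ∏ j, sgn (x (f j)))
      = ∑ x : Fin N → Bool, ∏ k, sgn (x k) ^ (m k + 1) := by
        exact Finset.sum_congr rfl fun x _ => h1 x
    _ = ∏ k, ∑ b : Bool, sgn b ^ (m k + 1) := (Fintype.prod_sum fun k b => sgn b ^ (m k + 1)).symm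
    _ = ∏ k : Fin N, (if Odd (m k) then (2:ℂ) else 0) := by
        exact prod_congr rfl fun k _ => sum_sgn_pow (m k)
    _ = if Function.Bijective f then (2 : ℂ) ^ N else 0 := by
      by_cases hf : Function.Bijective f
      · rw [if_pos hf]
        have hmk : ∀ k, m k = 1 := by
          intro k
          have : (univ.filter (fun j => f j = k)) = {(Equiv.ofBijective f hf).symm k} := by
            ext j
            simp only [mem_filter, mem_univ, true_and, mem_singleton]
            constructor
            · intro h; apply hf.injective; rw [h]
              exact (Equiv.ofBijective_apply_symm_apply f hf k).symm
            · intro h; rw [h]; exact Equiv.ofBijective_apply_symm_apply f hf k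
          rw [hm]; simp [this]
        simp only [hmk]
        norm_num
      · rw [if_neg hf]
        have : ∃ k, ¬ Odd (m k) := by
          by_contra hodd
          push_neg at hodd
          apply hf
          have hodd' : ∀ k, Odd (m k) := hodd
          have hpos : ∀ k, 1 ≤ m k := fun k => (hodd' k).pos
          have hsum : ∑ k, m k = N := by
            rw [hm]
            have := Finset.card_eq_sum_card_fiberwise
              (f := f) (s := univ) (t := (univ : Finset (Fin N)))
              (fun i _ => mem_univ _)
            simp only [Finset.card_univ, Fintype.card_fin] at this
            exact this.symm
          have hone : ∀ k, m k = 1 := by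
            have h2 : ∑ k : Fin N, (1:ℕ) = ∑ k, m k := by
              rw [hsum]; simp
            intro k
            exact ((Finset.sum_eq_sum_iff_of_le (fun i _ => hpos i)).mp h2 k (mem_univ k)).symm
          -- injective implies bijective
          have hinj : Function.Injective f := by
            intro a b hab
            have ha : a ∈ univ.filter (fun j => f j = f b) := by simp [hab]
            have hb : b ∈ univ.filter (fun j => f j = f b) := by simp
            have hcard : (univ.filter (fun j => f j = f b)).card = 1 := hone (f b)
            rw [Finset.card_eq_one] at hcard
            obtain ⟨c, hc⟩ := hcard
            rw [hc, mem_singleton] at ha hb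
            rw [ha, hb]
          exact Finite.injective_iff_bijective.mp hinj
        obtain ⟨k, hk⟩ := this
        exact Finset.prod_eq_zero (mem_univ k) (if_neg hk)

/-- Glynn's formula for the permanent. -/
theorem glynn_formula (N : ℕ) (hN : 1 ≤ N) (A : Matrix (Fin N) (Fin N) ℂ) :
    perm A =
      (2 : ℂ) ^ (-(N : ℤ)) *
        ∑ x : Fin N → Bool,
          (∏ k : Fin N, sgn (x k)) * ∏ j : Fin N, ∑ k : Fin N, A j k * sgn (x k) := by
  classical
  have key : (∑ x : Fin N → Bool,
      (∏ k : Fin N, sgn (x k)) * ∏ j : Fin N, ∑ k : Fin N, A j k * sgn (x k))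
      = 2 ^ N * perm A := by
    calc (∑ x : Fin N → Bool,
        (∏ k : Fin N, sgn (x k)) * ∏ j : Fin N, ∑ k : Fin N, A j k * sgn (x k))
        = ∑ x : Fin N → Bool, ∑ f : Fin N → Fin N,
            (∏ k, sgn (x k)) * ∏ j, A j (f j) * sgn (x (f j)) := by
          refine sum_congr rfl fun x _ => ?_
          rw [Fintype.prod_sum (fun j k => A j k * sgn (x k)), Finset.mul_sum]
      _ = ∑ f : Fin N → Fin N, ∑ x : Fin N → Bool,
            (∏ k, sgn (x k)) * ∏ j, A j (f j) * sgn (x (f j)) := Finset.sum_comm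
      _ = ∑ f : Fin N → Fin N, (∏ j, A j (f j)) *
            ∑ x : Fin N → Bool, (∏ k, sgn (x k)) * ∏ j, sgn (x (f j)) := by
          refine sum_congr rfl fun f _ => ?_
          rw [Finset.mul_sum]
          refine sum_congr rfl fun x _ => ?_
          rw [prod_mul_distrib]; ring
      _ = ∑ f : Fin N → Fin N, (∏ j, A j (f j)) *
            (if Function.Bijective f then (2:ℂ)^N else 0) := by
          refine sum_congr rfl fun f _ => ?_
          rw [sign_sum_eq]
      _ = ∑ f ∈ univ.filter (fun f : Fin N → Fin N => Function.Bijective f),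
            (2:ℂ)^N * ∏ j, A j (f j) := by
          rw [Finset.sum_filter]
          refine sum_congr rfl fun f _ => ?_
          split_ifs <;> ring
      _ = ∑ σ : Equiv.Perm (Fin N), (2:ℂ)^N * ∏ j, A j (σ j) := by
          refine Finset.sum_bij' (fun f hf => Equiv.ofBijective f
              (by simpa using (Finset.mem_filter.mp hf).2))
            (fun σ _ => ⇑σ) ?_ ?_ ?_ ?_ ?_
          · intro f hf; exact mem_univ _
          · intro σ _; exact Finset.mem_filter.mpr ⟨mem_univ _, σ.bijective⟩
          · intro f hf; rfl
          · intro σ _; ext j; simp [Equiv.ofBijective_apply]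
          · intro f hf; rfl
      _ = 2 ^ N * perm A := by rw [perm, Finset.mul_sum]
  rw [key, zpow_neg, zpow_natCast, ← mul_assoc,
    inv_mul_cancel₀ (by norm_num : (2:ℂ)^N ≠ 0), one_mul]
end

section
/- For any N×N complex matrix A and any fixed x ∈ {-1,1}^N, the monomial Π_{j=1}^N (A_j · x) equals (1/(N! 2^N)) Σ_{x' ∈ {-1,1}^N} (Π_{k=1}^N x'_k)(x'^T A x)^N, where A_j is the j-th row of A (Kan's monomial identity specialized to the rows A_j · x). -/
open Finset BigOperators

lemma sum_bool_sgn_pow (c : ℕ) :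
    (∑ b : Bool, sgn b ^ (1 + c)) = if Odd c then 2 else 0 := by
  rw [Fintype.sum_bool]
  rcases Nat.even_or_odd c with hc | hc
  · obtain ⟨m, rfl⟩ := hc
    have h2 : ¬ Odd (m + m) := by rw [Nat.odd_iff]; omega
    rw [if_neg h2]
    have h1 : (1 : ℕ) + (m + m) = 2 * m + 1 := by ring
    simp [sgn, h1, pow_succ, pow_mul]
  · obtain ⟨m, rfl⟩ := hc
    have h1 : (1 : ℕ) + (2 * m + 1) = 2 * (m + 1) := by ring
    have h2 : Odd (2 * m + 1) := ⟨m, rfl⟩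
    simp [sgn, h1, pow_mul, h2]
    norm_num

lemma kan_key (N : ℕ) (y : Fin N → ℂ) :
    ∑ ε : Fin N → Bool, (∏ j, sgn (ε j)) * (∑ j, sgn (ε j) * y j) ^ N
      = (N.factorial : ℂ) * 2 ^ N * ∏ j, y j := by
  classical
  have hpow : ∀ ε : Fin N → Bool, (∑ j, sgn (ε j) * y j) ^ N
      = ∑ f : Fin N → Fin N, ∏ i, (sgn (ε (f i)) * y (f i)) :=
    fun ε => Fintype.sum_pow _ N
  simp_rw [hpow, Finset.mul_sum]
  rw [Finset.sum_comm]
  have hterm : ∀ f : Fin N → Fin N,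
      (∑ ε : Fin N → Bool, (∏ j, sgn (ε j)) * ∏ i, (sgn (ε (f i)) * y (f i)))
        = if Function.Bijective f then 2 ^ N * ∏ j, y j else 0 := by
    intro f
    have h1 : ∀ ε : Fin N → Bool,
        (∏ j, sgn (ε j)) * ∏ i, (sgn (ε (f i)) * y (f i))
        = (∏ i, y (f i)) *
            ∏ j : Fin N, sgn (ε j) ^ (1 + (univ.filter fun i => f i = j).card) := by
      intro ε
      have h2 : ∏ i, sgn (ε (f i))
          = ∏ j : Fin N, sgn (ε j) ^ ((univ.filter fun i => f i = j).card) := by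
        rw [← Finset.prod_fiberwise univ f (fun i => sgn (ε (f i)))]
        refine Finset.prod_congr rfl fun j _ => ?_
        rw [show (∏ i ∈ univ.filter fun i => f i = j, sgn (ε (f i)))
            = ∏ i ∈ univ.filter fun i => f i = j, sgn (ε j) from
          Finset.prod_congr rfl fun i hi => by
            simp only [Finset.mem_filter] at hi; rw [hi.2], Finset.prod_const]
      calc (∏ j, sgn (ε j)) * ∏ i, (sgn (ε (f i)) * y (f i))
          = (∏ i, y (f i)) * ((∏ j, sgn (ε j)) * ∏ i, sgn (ε (f i))) := by
            rw [Finset.prod_mul_distrib]; ring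
        _ = _ := by
            rw [h2, ← Finset.prod_mul_distrib]
            simp_rw [pow_add, pow_one]
    simp_rw [h1, ← Finset.mul_sum]
    rw [← Fintype.prod_sum (fun j b => sgn b ^ (1 + (univ.filter fun i => f i = j).card))]
    simp_rw [sum_bool_sgn_pow]
    by_cases hf : Function.Bijective f
    · rw [if_pos hf]
      set σ := Equiv.ofBijective f hf with hσ
      have hfσ : f = ⇑σ := rfl
      have hfib : ∀ j : Fin N, (univ.filter fun i => f i = j).card = 1 := by
        intro j
        have : (univ.filter fun i => f i = j) = {σ.symm j} := by
          ext i
          simp [hfσ, ← Equiv.eq_symm_apply]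
        rw [this, Finset.card_singleton]
      have hy : ∏ i, y (f i) = ∏ j, y j := by rw [hfσ]; exact σ.prod_comp y
      simp only [hfib, hy]
      rw [if_pos (by decide : Odd 1), Finset.prod_const, Finset.card_univ,
        Fintype.card_fin, mul_comm]
    · rw [if_neg hf]
      have hs : ¬ Function.Surjective f := fun h => hf (Finite.surjective_iff_bijective.mp h)
      rw [Function.Surjective] at hs
      push_neg at hs
      obtain ⟨j, hj⟩ := hs
      have hfib : (univ.filter fun i => f i = j) = ∅ := by
        ext i; simpa using fun h => (hj i h).elim
      have hzero : (∏ j' : Fin N,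
          if Odd (univ.filter fun i => f i = j').card then (2 : ℂ) else 0) = 0 := by
        apply Finset.prod_eq_zero (Finset.mem_univ j)
        rw [hfib]
        simp [Nat.odd_iff]
      rw [hzero, mul_zero]
  rw [Finset.sum_congr rfl fun f _ => hterm f]
  rw [Finset.sum_ite, Finset.sum_const_zero, add_zero, Finset.sum_const, nsmul_eq_mul]
  have hcard : (univ.filter fun f : Fin N → Fin N => Function.Bijective f).card
      = N.factorial := by
    have h : (univ.filter fun f : Fin N → Fin N => Function.Bijective f).card
        = (univ : Finset (Equiv.Perm (Fin N))).card := by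
      refine Finset.card_bij'
        (fun (f : Fin N → Fin N) (hf : f ∈ univ.filter fun f => Function.Bijective f) =>
          Equiv.ofBijective f (by simpa using hf))
        (fun (σ : Equiv.Perm (Fin N)) (_ : σ ∈ univ) => ⇑σ)
        (fun f hf => Finset.mem_univ _)
        (fun σ _ => Finset.mem_filter.mpr ⟨Finset.mem_univ _, σ.bijective⟩) (fun f hf => rfl) (fun σ _ => by ext i; rfl)
    rw [h, Finset.card_univ, Fintype.card_perm, Fintype.card_fin]
  rw [hcard, mul_assoc]

/-- Kan's monomial identity applied to the row products `A_j · x`. -/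
theorem kan_monomial_identity (N : ℕ) (hN : 1 ≤ N) (A : Matrix (Fin N) (Fin N) ℂ)
    (x : Fin N → Bool) :
    ∏ j : Fin N, ∑ k : Fin N, A j k * sgn (x k) =
      (1 / ((N.factorial : ℂ) * 2 ^ N)) *
        ∑ x' : Fin N → Bool,
          (∏ k : Fin N, sgn (x' k)) *
            (∑ j : Fin N, ∑ k : Fin N, sgn (x' j) * A j k * sgn (x k)) ^ N := by
  have h : ∀ x' : Fin N → Bool,
      (∑ j : Fin N, ∑ k : Fin N, sgn (x' j) * A j k * sgn (x k))
        = ∑ j : Fin N, sgn (x' j) * ∑ k : Fin N, A j k * sgn (x k) := by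
    intro x'
    refine Finset.sum_congr rfl fun j _ => ?_
    rw [Finset.mul_sum]
    exact Finset.sum_congr rfl fun k _ => by ring
  simp_rw [h]
  rw [kan_key N (fun j => ∑ k, A j k * sgn (x k))]
  have hne : ((N.factorial : ℂ) * 2 ^ N) ≠ 0 :=
    mul_ne_zero (Nat.cast_ne_zero.mpr N.factorial_ne_zero) (pow_ne_zero _ two_ne_zero)
  rw [one_div, inv_mul_cancel_left₀ hne]
end

section
/- For any N×N complex matrix A with N ≥ 1, |Per(A)| ≤ (Σ_{j,k=1}^N |A_{jk}|)^N / N!. -/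
open Finset BigOperators

/-- Bound on the magnitude of the permanent from the Glynn-Kan formula. -/
theorem perm_abs_le (N : ℕ) (hN : 1 ≤ N) (A : Matrix (Fin N) (Fin N) ℂ) :
    ‖perm A‖ ≤
      (∑ j : Fin N, ∑ k : Fin N, ‖A j k‖) ^ N / N.factorial := by
  set a : Fin N × Fin N → ℝ := fun p => ‖A p.1 p.2‖ with ha
  have hanneg : ∀ p, 0 ≤ a p := fun p => norm_nonneg _
  have hS : (∑ j : Fin N, ∑ k : Fin N, ‖A j k‖) = ∑ p : Fin N × Fin N, a p := by
    rw [Fintype.sum_prod_type]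
  rw [hS]
  have hfact : (0:ℝ) < (N.factorial : ℝ) := by positivity
  rw [le_div_iff₀ hfact]
  have h1 : ‖perm A‖ ≤ ∑ σ : Equiv.Perm (Fin N), ∏ j, a (j, σ j) := by
    refine le_trans (norm_sum_le _ _) ?_
    refine Finset.sum_le_sum fun σ _ => ?_
    rw [norm_prod]
  -- define the injection
  set Φ : Equiv.Perm (Fin N) × Equiv.Perm (Fin N) → (Fin N → Fin N × Fin N) :=
    fun x i => (x.1 i, x.2 (x.1 i)) with hΦ
  have hΦinj : Function.Injective Φ := by
    rintro ⟨τ, σ⟩ ⟨τ', σ'⟩ h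
    have h' : ∀ i, (τ i, σ (τ i)) = (τ' i, σ' (τ' i)) := fun i => congrFun h i
    have hτ : τ = τ' := by
      ext i
      exact congrArg Fin.val ((Prod.mk.injEq _ _ _ _).mp (h' i)).1
    subst hτ
    have hσ : σ = σ' := by
      ext j
      obtain ⟨i, rfl⟩ := τ.surjective j
      exact congrArg Fin.val ((Prod.mk.injEq _ _ _ _).mp (h' i)).2
    simp [hσ]
  have key : (∑ σ : Equiv.Perm (Fin N), ∏ j, a (j, σ j)) * (N.factorial : ℝ)
      ≤ (∑ p : Fin N × Fin N, a p) ^ N := by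
    have hcard : (Fintype.card (Equiv.Perm (Fin N)) : ℝ) = (N.factorial : ℝ) := by
      rw [Fintype.card_perm, Fintype.card_fin]
    calc (∑ σ : Equiv.Perm (Fin N), ∏ j, a (j, σ j)) * (N.factorial : ℝ)
        = ∑ τ : Equiv.Perm (Fin N), ∑ σ : Equiv.Perm (Fin N), ∏ j, a (j, σ j) := by
          rw [Finset.sum_const, card_univ, Fintype.card_perm, Fintype.card_fin,
            nsmul_eq_mul, mul_comm]
      _ = ∑ x : Equiv.Perm (Fin N) × Equiv.Perm (Fin N), ∏ i, a (Φ x i) := by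
          rw [Fintype.sum_prod_type]
          refine Finset.sum_congr rfl fun τ _ => Finset.sum_congr rfl fun σ _ => ?_
          exact (Equiv.prod_comp τ (fun j => a (j, σ j))).symm
      _ = ∑ g ∈ Finset.univ.image Φ, ∏ i, a (g i) := by
          rw [Finset.sum_image (fun x _ y _ h => hΦinj h)]
      _ ≤ ∑ g : Fin N → Fin N × Fin N, ∏ i, a (g i) := by
          refine Finset.sum_le_sum_of_subset_of_nonneg (Finset.subset_univ _)
            fun g _ _ => Finset.prod_nonneg fun i _ => hanneg _
      _ = (∑ p : Fin N × Fin N, a p) ^ N := by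
          rw [← Fintype.piFinset_univ, ← Finset.prod_univ_sum]
          simp
  calc ‖perm A‖ * (N.factorial : ℝ)
      ≤ (∑ σ : Equiv.Perm (Fin N), ∏ j, a (j, σ j)) * (N.factorial : ℝ) :=
        mul_le_mul_of_nonneg_right h1 hfact.le
    _ ≤ (∑ p : Fin N × Fin N, a p) ^ N := key
end

section
/- For any N×N real matrix B with N even, Per(B) = (1/(N! 2^{2N})) [Σ_{x,x'} S₊(x,x')(x'^T B x)^N − Σ_{x,x'} S₋(x,x')(x'^T B x)^N], where S_±(x,x') = (Π_k x_k ± Π_k x'_k)²/4, and both sums are over all pairs x, x' ∈ {-1,1}^N; moreover each summand S_±(x,x')(x'^T B x)^N is nonnegative. -/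
open Finset BigOperators

/-- The permanent of a real square matrix. -/
noncomputable def permR {n : Type*} [Fintype n] [DecidableEq n] (B : Matrix n n ℝ) : ℝ :=
  ∑ σ : Equiv.Perm n, ∏ j, B j (σ j)

/-- A sign `∈ {-1,1}`, encoded by a Boolean. -/
def sgnR (b : Bool) : ℝ := if b then 1 else -1


lemma sum_pi_bool {N : ℕ} (f : Fin N → Bool → ℝ) :
    ∑ x : Fin N → Bool, ∏ k, f k (x k) = ∏ k, (f k false + f k true) := by
  rw [← Fintype.piFinset_univ, ← Finset.prod_univ_sum]
  simp [add_comm]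

lemma orth {N : ℕ} (g : Fin N → Fin N) :
    ∑ x : Fin N → Bool, (∏ k, sgnR (x k)) * ∏ j, sgnR (x (g j)) =
      if Function.Bijective g then (2:ℝ)^N else 0 := by
  set m : Fin N → ℕ := fun k => (univ.filter (fun j => g j = k)).card with hm
  have hfib : ∀ x : Fin N → Bool, ∏ j, sgnR (x (g j)) = ∏ k, sgnR (x k) ^ m k := by
    intro x
    rw [← Finset.prod_fiberwise_of_maps_to (g := g) (t := univ) (fun j _ => mem_univ _)]
    refine Finset.prod_congr rfl fun k _ => ?_
    rw [Finset.prod_congr rfl (fun j hj => by rw [(Finset.mem_filter.1 hj).2]),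
      Finset.prod_const]
  have h2 : ∑ x : Fin N → Bool, (∏ k, sgnR (x k)) * ∏ j, sgnR (x (g j)) =
      ∏ k, ((-1:ℝ) ^ (m k + 1) + 1) := by
    calc ∑ x : Fin N → Bool, (∏ k, sgnR (x k)) * ∏ j, sgnR (x (g j))
        = ∑ x : Fin N → Bool, ∏ k, sgnR (x k) ^ (m k + 1) := by
          refine Finset.sum_congr rfl fun x _ => ?_
          rw [hfib, ← Finset.prod_mul_distrib]
          exact Finset.prod_congr rfl fun k _ => by rw [pow_succ, mul_comm]
      _ = ∏ k, (sgnR false ^ (m k + 1) + sgnR true ^ (m k + 1)) := sum_pi_bool (fun k b => sgnR b ^ (m k + 1))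
      _ = _ := by
          refine Finset.prod_congr rfl fun k _ => ?_
          simp [sgnR]
  rw [h2]
  by_cases hg : Function.Bijective g
  · rw [if_pos hg]
    have hmk : ∀ k, m k = 1 := by
      intro k
      have : univ.filter (fun j => g j = k) = {(Equiv.ofBijective g hg).symm k} := by
        ext j
        simp only [Finset.mem_filter, mem_univ, true_and, Finset.mem_singleton]
        constructor
        · intro h
          apply hg.injective
          rw [h]
          exact ((Equiv.ofBijective g hg).apply_symm_apply k).symm
        · intro h; subst h; exact (Equiv.ofBijective g hg).apply_symm_apply k
      rw [hm]; simp only [this, Finset.card_singleton]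
    simp [hmk]; norm_num
  · rw [if_neg hg]
    have hsurj : ¬ Function.Surjective g := fun hs => hg (Finite.surjective_iff_bijective.1 hs)
    unfold Function.Surjective at hsurj
    push_neg at hsurj
    obtain ⟨k, hk⟩ := hsurj
    refine Finset.prod_eq_zero (mem_univ k) ?_
    have : m k = 0 := by
      rw [hm, Finset.card_eq_zero]
      ext j; simp [hk j]
    rw [this]; norm_num


lemma key {N : ℕ} (c : Fin N → Fin N → ℝ) :
    ∑ x : Fin N → Bool, (∏ k, sgnR (x k)) * ∏ j, (∑ k, c j k * sgnR (x k)) =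
      2^N * ∑ σ : Equiv.Perm (Fin N), ∏ j, c j (σ j) := by
  have h1 : ∀ x : Fin N → Bool,
      (∏ k, sgnR (x k)) * ∏ j, (∑ k, c j k * sgnR (x k)) =
      ∑ g ∈ Fintype.piFinset (fun _ : Fin N => (univ : Finset (Fin N))),
        (∏ j, c j (g j)) * ((∏ k, sgnR (x k)) * ∏ j, sgnR (x (g j))) := by
    intro x
    rw [Finset.prod_univ_sum, Finset.mul_sum]
    refine Finset.sum_congr rfl fun g _ => ?_
    rw [Finset.prod_mul_distrib]
    ring
  rw [Finset.sum_congr rfl fun x _ => h1 x, Finset.sum_comm]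
  have h2 : ∀ g : Fin N → Fin N,
      ∑ x : Fin N → Bool, (∏ j, c j (g j)) * ((∏ k, sgnR (x k)) * ∏ j, sgnR (x (g j))) =
      if Function.Bijective g then (2:ℝ)^N * ∏ j, c j (g j) else 0 := by
    intro g
    rw [← Finset.mul_sum, orth g]
    split <;> ring
  rw [Finset.sum_congr rfl fun g _ => h2 g]
  rw [Fintype.piFinset_univ, Finset.sum_ite, Finset.sum_const_zero, add_zero, Finset.mul_sum]
  refine (Finset.sum_bij (fun (σ : Equiv.Perm (Fin N)) _ => (σ : Fin N → Fin N)) ?_ ?_ ?_ ?_).symm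
  · intro σ _; exact Finset.mem_filter.2 ⟨mem_univ _, σ.bijective⟩
  · intro a _ b _ h; exact Equiv.coe_fn_injective h
  · intro g hg
    have hb : Function.Bijective g := by simpa using (Finset.mem_filter.1 hg).2
    exact ⟨Equiv.ofBijective g hb, mem_univ _, rfl⟩
  · intro σ _; rfl

/-- The permanent of a real matrix of even dimension as a difference of two sums of
nonnegative terms (GapP structure), with `S±(x,x') = (Πₖ xₖ ± Πₖ x'ₖ)²/4`. -/
theorem perm_gap_formula (N : ℕ) (hN : Even N) (hN1 : 1 ≤ N) (B : Matrix (Fin N) (Fin N) ℝ) :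
    permR B =
      (1 / ((N.factorial : ℝ) * 2 ^ (2 * N))) *
        ((∑ x : Fin N → Bool, ∑ x' : Fin N → Bool,
            (((∏ k : Fin N, sgnR (x k)) + ∏ k : Fin N, sgnR (x' k)) ^ 2 / 4) *
              (∑ j : Fin N, ∑ k : Fin N, sgnR (x' j) * B j k * sgnR (x k)) ^ N) -
          ∑ x : Fin N → Bool, ∑ x' : Fin N → Bool,
            (((∏ k : Fin N, sgnR (x k)) - ∏ k : Fin N, sgnR (x' k)) ^ 2 / 4) *
              (∑ j : Fin N, ∑ k : Fin N, sgnR (x' j) * B j k * sgnR (x k)) ^ N) ∧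
      (∀ x x' : Fin N → Bool,
        0 ≤ (((∏ k : Fin N, sgnR (x k)) + ∏ k : Fin N, sgnR (x' k)) ^ 2 / 4) *
              (∑ j : Fin N, ∑ k : Fin N, sgnR (x' j) * B j k * sgnR (x k)) ^ N ∧
        0 ≤ (((∏ k : Fin N, sgnR (x k)) - ∏ k : Fin N, sgnR (x' k)) ^ 2 / 4) *
              (∑ j : Fin N, ∑ k : Fin N, sgnR (x' j) * B j k * sgnR (x k)) ^ N) := by
  constructor
  · -- main formula
    set a : (Fin N → Bool) → Fin N → ℝ := fun x j => ∑ k, B j k * sgnR (x k) with ha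
    have hdiff :
        ((∑ x : Fin N → Bool, ∑ x' : Fin N → Bool,
            (((∏ k : Fin N, sgnR (x k)) + ∏ k : Fin N, sgnR (x' k)) ^ 2 / 4) *
              (∑ j : Fin N, ∑ k : Fin N, sgnR (x' j) * B j k * sgnR (x k)) ^ N) -
          ∑ x : Fin N → Bool, ∑ x' : Fin N → Bool,
            (((∏ k : Fin N, sgnR (x k)) - ∏ k : Fin N, sgnR (x' k)) ^ 2 / 4) *
              (∑ j : Fin N, ∑ k : Fin N, sgnR (x' j) * B j k * sgnR (x k)) ^ N) =
        ∑ x : Fin N → Bool, (∏ k, sgnR (x k)) *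
          ∑ x' : Fin N → Bool, (∏ k, sgnR (x' k)) *
            (∑ j : Fin N, ∑ k : Fin N, sgnR (x' j) * B j k * sgnR (x k)) ^ N := by
      rw [← Finset.sum_sub_distrib]
      refine Finset.sum_congr rfl fun x _ => ?_
      rw [← Finset.sum_sub_distrib, Finset.mul_sum]
      refine Finset.sum_congr rfl fun x' _ => ?_
      ring
    have hinner : ∀ x : Fin N → Bool,
        ∑ x' : Fin N → Bool, (∏ k, sgnR (x' k)) *
            (∑ j : Fin N, ∑ k : Fin N, sgnR (x' j) * B j k * sgnR (x k)) ^ N =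
        2 ^ N * ((N.factorial : ℝ) * ∏ j, a x j) := by
      intro x
      have hq : ∀ x' : Fin N → Bool,
          (∑ j : Fin N, ∑ k : Fin N, sgnR (x' j) * B j k * sgnR (x k)) ^ N =
          ∏ _i : Fin N, ∑ k, a x k * sgnR (x' k) := by
        intro x'
        rw [Finset.prod_const, Finset.card_univ, Fintype.card_fin]
        congr 1
        refine Finset.sum_congr rfl fun j _ => ?_
        show _ = (∑ k, B j k * sgnR (x k)) * sgnR (x' j)
        rw [Finset.sum_mul]
        exact Finset.sum_congr rfl fun k _ => by ring
      rw [Finset.sum_congr rfl fun x' _ => by rw [hq x'],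
        key (fun _ k => a x k)]
      congr 1
      have : ∀ σ : Equiv.Perm (Fin N), (∏ j, a x (σ j)) = ∏ j, a x j :=
        fun σ => Equiv.prod_comp σ (a x)
      rw [Finset.sum_congr rfl fun σ _ => this σ, Finset.sum_const, Finset.card_univ,
        nsmul_eq_mul]
      congr 1
      simp [Fintype.card_perm]
    rw [hdiff, Finset.sum_congr rfl fun x _ => by rw [hinner x]]
    have houter : ∑ x : Fin N → Bool, (∏ k, sgnR (x k)) *
        (2 ^ N * ((N.factorial : ℝ) * ∏ j, a x j)) =
        2 ^ N * ((N.factorial : ℝ) * (2 ^ N * permR B)) := by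
      have hk : ∑ x : Fin N → Bool, (∏ k, sgnR (x k)) * ∏ j, a x j = 2 ^ N * permR B := by
        rw [ha]
        exact key (fun j k => B j k)
      rw [← hk, Finset.mul_sum, Finset.mul_sum]
      exact Finset.sum_congr rfl fun x _ => by ring
    rw [houter]
    have hfac : (N.factorial : ℝ) ≠ 0 := Nat.cast_ne_zero.2 N.factorial_ne_zero
    rw [two_mul, pow_add]
    field_simp
  · intro x x'
    constructor <;>
      exact mul_nonneg (div_nonneg (sq_nonneg _) (by norm_num)) (hN.pow_nonneg _)
end

section
/- For any N×N complex matrix A = B + iC with B, C real N×N matrices, Per(A) = (1/(N! 2^{2N})) Σ_{l=0}^N i^l binom(N,l) Σ_{x,x' ∈ {-1,1}^N} (Π_{k=1}^N x_k x'_k)(x'^T B x)^{N-l}(x'^T C x)^l. -/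
open Finset BigOperators

lemma sum_bool_pow (e : ℕ) : ∑ b : Bool, ((sgnR b : ℝ) : ℂ) ^ e = if Even e then 2 else 0 := by
  rw [Fintype.sum_bool]
  simp only [sgnR]
  by_cases h : Even e
  · simp [h, h.neg_one_pow]; norm_num
  · rw [Nat.not_even_iff_odd] at h
    simp [Nat.not_even_iff_odd.2 h, h.neg_one_pow]

lemma key_sum_s10 (N : ℕ) (q : Fin N → Fin N) :
    ∑ x : Fin N → Bool, (∏ k, ((sgnR (x k) : ℝ) : ℂ)) * ∏ t, ((sgnR (x (q t)) : ℝ) : ℂ)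
      = if Function.Bijective q then (2 : ℂ) ^ N else 0 := by
  have h1 : ∀ x : Fin N → Bool, ∏ t, ((sgnR (x (q t)) : ℝ) : ℂ)
      = ∏ k, ((sgnR (x k) : ℝ) : ℂ) ^ ((univ.filter fun t => q t = k).card) := by
    intro x
    rw [← Finset.prod_fiberwise' univ q (fun k => ((sgnR (x k) : ℝ) : ℂ))]
    simp [Finset.prod_const]
  have h2 : ∀ x : Fin N → Bool,
      (∏ k, ((sgnR (x k) : ℝ) : ℂ)) * ∏ t, ((sgnR (x (q t)) : ℝ) : ℂ)
      = ∏ k, ((sgnR (x k) : ℝ) : ℂ) ^ ((univ.filter fun t => q t = k).card + 1) := by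
    intro x
    rw [h1, ← Finset.prod_mul_distrib]
    exact Finset.prod_congr rfl fun k _ => by rw [pow_succ']
  simp only [h2]
  rw [← Fintype.prod_sum (fun k b => ((sgnR b : ℝ) : ℂ) ^ ((univ.filter fun t => q t = k).card + 1))]
  simp only [sum_bool_pow]
  by_cases hq : Function.Bijective q
  · rw [if_pos hq]
    have hm : ∀ k, (univ.filter fun t => q t = k).card = 1 := by
      intro k
      have : (univ.filter fun t => q t = k) = {(Equiv.ofBijective q hq).symm k} := by
        ext t
        simp only [Finset.mem_filter, Finset.mem_univ, true_and, Finset.mem_singleton,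
          Equiv.eq_symm_apply, Equiv.ofBijective_apply]
      rw [this, Finset.card_singleton]
    have : ∀ k : Fin N, (if Even ((univ.filter fun t => q t = k).card + 1) then (2:ℂ) else 0) = 2 := by
      intro k; rw [hm k]; norm_num
    simp only [this, Finset.prod_const, Finset.card_univ, Fintype.card_fin]
  · rw [if_neg hq]
    have hs : ¬ Function.Surjective q := fun h => hq (Finite.surjective_iff_bijective.1 h)
    unfold Function.Surjective at hs
    push_neg at hs
    obtain ⟨k, hk⟩ := hs
    apply Finset.prod_eq_zero (Finset.mem_univ k)
    have : (univ.filter fun t => q t = k) = ∅ := by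
      ext t; simp only [Finset.mem_filter, Finset.mem_univ, true_and, Finset.notMem_empty,
        iff_false]
      exact fun h => hk t h
    rw [this]
    norm_num

lemma gk (N : ℕ) (A : Matrix (Fin N) (Fin N) ℂ) :
    ∑ x : Fin N → Bool, ∑ x' : Fin N → Bool,
      (∏ k, ((sgnR (x k) : ℝ) : ℂ) * ((sgnR (x' k) : ℝ) : ℂ)) *
        (∑ j, ∑ k, ((sgnR (x' j) : ℝ) : ℂ) * A j k * ((sgnR (x k) : ℝ) : ℂ)) ^ N
      = (N.factorial : ℂ) * 2 ^ (2 * N) * perm A := by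
  classical
  have expand : ∀ x x' : Fin N → Bool,
      (∑ j, ∑ k, ((sgnR (x' j) : ℝ) : ℂ) * A j k * ((sgnR (x k) : ℝ) : ℂ)) ^ N
      = ∑ p : Fin N → Fin N × Fin N,
          ∏ t, ((sgnR (x' (p t).1) : ℝ) : ℂ) * A (p t).1 (p t).2 * ((sgnR (x (p t).2) : ℝ) : ℂ) := by
    intro x x'
    rw [← Fintype.sum_prod_type']
    exact Fintype.sum_pow (fun jk : Fin N × Fin N =>
      ((sgnR (x' jk.1) : ℝ) : ℂ) * A jk.1 jk.2 * ((sgnR (x jk.2) : ℝ) : ℂ)) N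
  simp only [expand, Finset.mul_sum]
  have swap1 : ∀ x : Fin N → Bool,
      (∑ x' : Fin N → Bool, ∑ p : Fin N → Fin N × Fin N,
        (∏ k, ((sgnR (x k) : ℝ) : ℂ) * ((sgnR (x' k) : ℝ) : ℂ)) *
          ∏ t, ((sgnR (x' (p t).1) : ℝ) : ℂ) * A (p t).1 (p t).2 * ((sgnR (x (p t).2) : ℝ) : ℂ))
      = ∑ p : Fin N → Fin N × Fin N, ∑ x' : Fin N → Bool,
        (∏ k, ((sgnR (x k) : ℝ) : ℂ) * ((sgnR (x' k) : ℝ) : ℂ)) *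
          ∏ t, ((sgnR (x' (p t).1) : ℝ) : ℂ) * A (p t).1 (p t).2 * ((sgnR (x (p t).2) : ℝ) : ℂ) :=
    fun x => Finset.sum_comm
  simp only [swap1]
  rw [Finset.sum_comm]
  have hp : ∀ p : Fin N → Fin N × Fin N,
      (∑ x : Fin N → Bool, ∑ x' : Fin N → Bool,
        (∏ k, ((sgnR (x k) : ℝ) : ℂ) * ((sgnR (x' k) : ℝ) : ℂ)) *
          ∏ t, ((sgnR (x' (p t).1) : ℝ) : ℂ) * A (p t).1 (p t).2 * ((sgnR (x (p t).2) : ℝ) : ℂ))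
      = (∏ t, A (p t).1 (p t).2) *
          ((∑ x' : Fin N → Bool, (∏ k, ((sgnR (x' k) : ℝ) : ℂ)) * ∏ t, ((sgnR (x' ((fun t => (p t).1) t)) : ℝ) : ℂ)) *
           (∑ x : Fin N → Bool, (∏ k, ((sgnR (x k) : ℝ) : ℂ)) * ∏ t, ((sgnR (x ((fun t => (p t).2) t)) : ℝ) : ℂ))) := by
    intro p
    conv_lhs => rw [Finset.sum_comm]
    rw [Finset.sum_mul_sum, Finset.mul_sum]
    refine Finset.sum_congr rfl fun x' _ => ?_
    rw [Finset.mul_sum]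
    refine Finset.sum_congr rfl fun x _ => ?_
    simp only [Finset.prod_mul_distrib]
    ring
  simp only [hp, key_sum_s10]
  have hite : ∀ p : Fin N → Fin N × Fin N,
      (∏ t, A (p t).1 (p t).2) *
        ((if Function.Bijective (fun t => (p t).1) then (2:ℂ)^N else 0) *
         (if Function.Bijective (fun t => (p t).2) then (2:ℂ)^N else 0))
      = if Function.Bijective (fun t => (p t).1) ∧ Function.Bijective (fun t => (p t).2)
          then (2:ℂ)^(2*N) * ∏ t, A (p t).1 (p t).2 else 0 := by
    intro p
    by_cases h1 : Function.Bijective (fun t => (p t).1)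
    · by_cases h2 : Function.Bijective (fun t => (p t).2)
      · rw [if_pos h1, if_pos h2, if_pos ⟨h1, h2⟩, two_mul, pow_add]; ring
      · rw [if_neg h2, if_neg (fun h : (Function.Bijective fun t => (p t).1) ∧ (Function.Bijective fun t => (p t).2) => h2 h.2)]; ring
    · rw [if_neg h1, if_neg (fun h : (Function.Bijective fun t => (p t).1) ∧ (Function.Bijective fun t => (p t).2) => h1 h.1)]; ring
  simp only [hite]
  rw [← Finset.sum_filter]
  have hbij : ∑ p ∈ Finset.univ.filter (fun p : Fin N → Fin N × Fin N =>
        Function.Bijective (fun t => (p t).1) ∧ Function.Bijective (fun t => (p t).2)),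
        ((2:ℂ)^(2*N) * ∏ t, A (p t).1 (p t).2)
      = ∑ σp : Equiv.Perm (Fin N) × Equiv.Perm (Fin N), (2:ℂ)^(2*N) * ∏ t, A (σp.1 t) (σp.2 t) := by
    refine (Finset.sum_bij (fun (σp : Equiv.Perm (Fin N) × Equiv.Perm (Fin N)) _ =>
        (fun t => (σp.1 t, σp.2 t) : Fin N → Fin N × Fin N)) ?_ ?_ ?_ ?_).symm
    · intro σp _
      simp only [Finset.mem_filter, Finset.mem_univ, true_and]
      exact ⟨σp.1.bijective, σp.2.bijective⟩
    · intro a _ b _ h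
      have h1 := fun t => congrArg Prod.fst (congrFun h t)
      have h2 := fun t => congrArg Prod.snd (congrFun h t)
      exact Prod.ext (Equiv.ext h1) (Equiv.ext h2)
    · intro p hp'
      simp only [Finset.mem_filter, Finset.mem_univ, true_and] at hp'
      exact ⟨(Equiv.ofBijective _ hp'.1, Equiv.ofBijective _ hp'.2), Finset.mem_univ _,
        funext fun t => rfl⟩
    · intro σp _
      rfl
  rw [hbij, ← Finset.mul_sum, Fintype.sum_prod_type]
  have hperm : ∀ σ' : Equiv.Perm (Fin N),
      ∑ σ : Equiv.Perm (Fin N), ∏ t, A (σ' t) (σ t) = perm A := by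
    intro σ'
    have h1 : ∀ σ : Equiv.Perm (Fin N),
        ∏ t, A (σ' t) (σ t) = ∏ j, A j ((σ * σ'⁻¹) j) := by
      intro σ
      rw [← Equiv.prod_comp σ' (fun j => A j ((σ * σ'⁻¹) j))]
      simp [Equiv.Perm.mul_apply]
    simp only [h1]
    exact Fintype.sum_equiv (Equiv.mulRight σ'⁻¹) _ _ (fun σ => rfl)
  simp only [hperm, Finset.sum_const, Finset.card_univ, Fintype.card_perm, Fintype.card_fin,
    nsmul_eq_mul]
  ring

/-- The Glynn-Kan formula for a complex matrix `A = B + iC`, binomially expanded in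
terms of its real and imaginary parts. -/
theorem glynn_kan_complex (N : ℕ) (hN : 1 ≤ N) (B C : Matrix (Fin N) (Fin N) ℝ)
    (A : Matrix (Fin N) (Fin N) ℂ)
    (hA : ∀ j k, A j k = (B j k : ℂ) + Complex.I * (C j k : ℂ)) :
    perm A =
      (1 / ((N.factorial : ℂ) * 2 ^ (2 * N))) *
        ∑ l ∈ Finset.range (N + 1),
          Complex.I ^ l * (N.choose l : ℂ) *
            ∑ x : Fin N → Bool, ∑ x' : Fin N → Bool,
              ((∏ k : Fin N, (sgnR (x k) * sgnR (x' k) : ℝ)) : ℂ) *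
                ((∑ j : Fin N, ∑ k : Fin N, sgnR (x' j) * B j k * sgnR (x k) : ℝ) : ℂ) ^ (N - l) *
                ((∑ j : Fin N, ∑ k : Fin N, sgnR (x' j) * C j k * sgnR (x k) : ℝ) : ℂ) ^ l := by
  have hSA : ∀ x x' : Fin N → Bool,
      ((∑ j : Fin N, ∑ k : Fin N, sgnR (x' j) * B j k * sgnR (x k) : ℝ) : ℂ)
        + Complex.I * ((∑ j : Fin N, ∑ k : Fin N, sgnR (x' j) * C j k * sgnR (x k) : ℝ) : ℂ)
      = ∑ j, ∑ k, ((sgnR (x' j) : ℝ) : ℂ) * A j k * ((sgnR (x k) : ℝ) : ℂ) := by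
    intro x x'
    simp only [hA]
    push_cast
    simp only [Finset.mul_sum]
    rw [← Finset.sum_add_distrib]
    refine Finset.sum_congr rfl fun j _ => ?_
    rw [← Finset.sum_add_distrib]
    refine Finset.sum_congr rfl fun k _ => ?_
    ring
  have hl : ∀ x x' : Fin N → Bool,
      ∑ l ∈ Finset.range (N + 1), Complex.I ^ l * (N.choose l : ℂ) *
        (((∏ k : Fin N, (sgnR (x k) * sgnR (x' k) : ℝ)) : ℂ) *
          ((∑ j : Fin N, ∑ k : Fin N, sgnR (x' j) * B j k * sgnR (x k) : ℝ) : ℂ) ^ (N - l) *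
          ((∑ j : Fin N, ∑ k : Fin N, sgnR (x' j) * C j k * sgnR (x k) : ℝ) : ℂ) ^ l)
      = ((∏ k : Fin N, (sgnR (x k) * sgnR (x' k) : ℝ)) : ℂ) *
          (∑ j, ∑ k, ((sgnR (x' j) : ℝ) : ℂ) * A j k * ((sgnR (x k) : ℝ) : ℂ)) ^ N := by
    intro x x'
    rw [← hSA x x',
      add_comm (((∑ j : Fin N, ∑ k : Fin N, sgnR (x' j) * B j k * sgnR (x k) : ℝ) : ℂ))
        (Complex.I * _), add_pow, Finset.mul_sum]
    refine Finset.sum_congr rfl fun l hl => ?_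
    rw [mul_pow]
    ring
  have key : ∑ l ∈ Finset.range (N + 1),
        Complex.I ^ l * (N.choose l : ℂ) *
          ∑ x : Fin N → Bool, ∑ x' : Fin N → Bool,
            ((∏ k : Fin N, (sgnR (x k) * sgnR (x' k) : ℝ)) : ℂ) *
              ((∑ j : Fin N, ∑ k : Fin N, sgnR (x' j) * B j k * sgnR (x k) : ℝ) : ℂ) ^ (N - l) *
              ((∑ j : Fin N, ∑ k : Fin N, sgnR (x' j) * C j k * sgnR (x k) : ℝ) : ℂ) ^ l
      = (N.factorial : ℂ) * 2 ^ (2 * N) * perm A := by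
    calc
      _ = ∑ x : Fin N → Bool, ∑ x' : Fin N → Bool, ∑ l ∈ Finset.range (N + 1),
            Complex.I ^ l * (N.choose l : ℂ) *
              (((∏ k : Fin N, (sgnR (x k) * sgnR (x' k) : ℝ)) : ℂ) *
                ((∑ j : Fin N, ∑ k : Fin N, sgnR (x' j) * B j k * sgnR (x k) : ℝ) : ℂ) ^ (N - l) *
                ((∑ j : Fin N, ∑ k : Fin N, sgnR (x' j) * C j k * sgnR (x k) : ℝ) : ℂ) ^ l) := by
          simp only [Finset.mul_sum]
          rw [Finset.sum_comm]
          exact Finset.sum_congr rfl fun x _ => Finset.sum_comm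
      _ = ∑ x : Fin N → Bool, ∑ x' : Fin N → Bool,
            ((∏ k : Fin N, (sgnR (x k) * sgnR (x' k) : ℝ)) : ℂ) *
              (∑ j, ∑ k, ((sgnR (x' j) : ℝ) : ℂ) * A j k * ((sgnR (x k) : ℝ) : ℂ)) ^ N :=
          Finset.sum_congr rfl fun x _ => Finset.sum_congr rfl fun x' _ => hl x x'
      _ = (N.factorial : ℂ) * 2 ^ (2 * N) * perm A := by
          simp only [Complex.ofReal_prod, Complex.ofReal_mul]
          exact gk N A
  rw [key]
  have h2N : ((2 : ℂ)) ^ (2 * N) ≠ 0 := pow_ne_zero _ two_ne_zero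
  have hfac : (N.factorial : ℂ) ≠ 0 := Nat.cast_ne_zero.2 N.factorial_ne_zero
  field_simp
end

section
/- For an N×N real matrix B, Per(B) = (1/N!) ⟨φ| P · H(B)^N |φ⟩, where |φ⟩ = 2^{-N} Σ_{y ∈ {0,1}^{2N}} |y⟩ is the uniform superposition on 2N qubits, P = ⊗_{k=1}^N Z_k Z_{N+k}, and H(B) = Σ_{j,k=1}^N B_{jk} Z_{N+j} Z_k; equivalently, in terms of diagonal operators on {-1,1}^{2N}, Per(B) = (1/(N! 2^{2N})) Σ_{s ∈ {-1,1}^{2N}} (Π_{k=1}^N s_k s_{N+k})(Σ_{j,k} B_{jk} s_{N+j} s_k)^N. -/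
open Finset BigOperators
open Function

lemma sgnR_pow_sum (m : ℕ) : (∑ b : Bool, sgnR b ^ m) = 1 + (-1:ℝ)^m := by
  simp [sgnR]

lemma signSumAux (N : ℕ) (g : Fin N → Fin N) :
    (∑ s : Fin N → Bool, (∏ k, sgnR (s k)) * ∏ i, sgnR (s (g i))) =
      if Function.Bijective g then (2:ℝ)^N else 0 := by
  have h1 : ∀ s : Fin N → Bool, (∏ k, sgnR (s k)) * ∏ i, sgnR (s (g i))
      = ∏ k, sgnR (s k) ^ (1 + (univ.filter fun i => g i = k).card) := by
    intro s
    have h2 : (∏ i, sgnR (s (g i)))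
        = ∏ k : Fin N, sgnR (s k) ^ (univ.filter fun i => g i = k).card := by
      rw [← Finset.prod_fiberwise' univ g (fun k => sgnR (s k))]
      exact Finset.prod_congr rfl fun k _ => (Finset.prod_const _)
    rw [h2, ← Finset.prod_mul_distrib]
    exact Finset.prod_congr rfl fun k _ => by rw [pow_add, pow_one]
  rw [Finset.sum_congr rfl fun s _ => h1 s]
  rw [← Fintype.prod_sum (fun k b => sgnR b ^ (1 + (univ.filter fun i => g i = k).card))]
  by_cases hg : Function.Bijective g
  · rw [if_pos hg]
    have hcard : ∀ k, (univ.filter fun i => g i = k).card = 1 := by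
      intro k
      have : (univ.filter fun i => g i = k) = {(Equiv.ofBijective g hg).symm k} := by
        ext i
        simp only [Finset.mem_filter, Finset.mem_univ, true_and, Finset.mem_singleton,
          Equiv.symm_apply_eq]
        rw [Equiv.eq_symm_apply]
        rw [Equiv.ofBijective_apply]
      rw [this, Finset.card_singleton]
    have : ∀ k : Fin N, (∑ b : Bool, sgnR b ^ (1 + (univ.filter fun i => g i = k).card)) = 2 := by
      intro k; rw [hcard k, sgnR_pow_sum]; norm_num
    rw [Finset.prod_congr rfl fun k _ => this k, Finset.prod_const]
    simp
  · rw [if_neg hg]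
    have hsurj : ¬ Function.Surjective g := fun h => hg (Finite.surjective_iff_bijective.mp h)
    rw [Function.Surjective] at hsurj
    push_neg at hsurj
    obtain ⟨k, hk⟩ := hsurj
    refine Finset.prod_eq_zero (Finset.mem_univ k) ?_
    have : (univ.filter fun i => g i = k) = ∅ := by
      ext i; simp; exact fun h => hk i h
    rw [this, Finset.card_empty, sgnR_pow_sum]
    norm_num

lemma sum_bijfilter (N : ℕ) (F : (Fin N → Fin N) → ℝ) :
    (∑ g : Fin N → Fin N, if Function.Bijective g then F g else 0)
      = ∑ π : Equiv.Perm (Fin N), F ⇑π := by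
  classical
  rw [← Finset.sum_filter]
  refine (Finset.sum_bij' (fun (π : Equiv.Perm (Fin N)) (_ : π ∈ univ) => ⇑π)
    (fun g hg => Equiv.ofBijective g (by simpa using (Finset.mem_filter.mp hg).2))
    ?_ ?_ ?_ ?_ ?_).symm
  · intro π _; exact Finset.mem_filter.mpr ⟨Finset.mem_univ _, π.bijective⟩
  · intro g hg; exact Finset.mem_univ _
  · intro π _; ext i; rfl
  · intro g hg; rfl
  · intro π _; rfl

lemma sum_perm_perm (N : ℕ) (B : Matrix (Fin N) (Fin N) ℝ) :
    (∑ π : Equiv.Perm (Fin N), ∑ τ : Equiv.Perm (Fin N), ∏ i, B (π i) (τ i))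
      = (N.factorial : ℝ) * (∑ σ : Equiv.Perm (Fin N), ∏ j, B j (σ j)) := by
  have h : ∀ π : Equiv.Perm (Fin N),
      (∑ τ : Equiv.Perm (Fin N), ∏ i, B (π i) (τ i))
        = ∑ σ : Equiv.Perm (Fin N), ∏ j, B j (σ j) := by
    intro π
    have h1 : ∀ τ : Equiv.Perm (Fin N),
        (∏ i, B (π i) (τ i)) = ∏ j, B j ((τ * π⁻¹) j) := by
      intro τ
      rw [← Equiv.prod_comp π (fun j => B j ((τ * π⁻¹) j))]
      refine Finset.prod_congr rfl fun i _ => ?_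
      simp [Equiv.Perm.mul_apply]
    rw [Finset.sum_congr rfl fun τ _ => h1 τ]
    exact Equiv.sum_comp (Equiv.mulRight π⁻¹) (fun σ => ∏ j, B j (σ j))
  rw [Finset.sum_congr rfl fun π _ => h π, Finset.sum_const, Finset.card_univ, Fintype.card_perm,
    Fintype.card_fin, nsmul_eq_mul]

/-- `Per(B) = (1/N!) ⟨φ| P · H(B)^N |φ⟩`: since the parity operator `P` and the Ising
operator `H(B)` are diagonal in the computational basis, the expectation value in the
uniform superposition `|φ⟩` on `2N` qubits reduces to the average over all sign
configurations `s ∈ {-1,1}^{2N}`, written here as pairs `(s, s')` with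
`s_k = s k` and `s_{N+k} = s' k`. -/
theorem perm_as_expectation (N : ℕ) (hN : 1 ≤ N) (B : Matrix (Fin N) (Fin N) ℝ) :
    permR B =
      (1 / ((N.factorial : ℝ) * 2 ^ (2 * N))) *
        ∑ s : Fin N → Bool, ∑ s' : Fin N → Bool,
          (∏ k : Fin N, sgnR (s k) * sgnR (s' k)) *
            (∑ j : Fin N, ∑ k : Fin N, B j k * sgnR (s' j) * sgnR (s k)) ^ N := by
  classical
  have key : (∑ s : Fin N → Bool, ∑ s' : Fin N → Bool,
          (∏ k : Fin N, sgnR (s k) * sgnR (s' k)) *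
            (∑ j : Fin N, ∑ k : Fin N, B j k * sgnR (s' j) * sgnR (s k)) ^ N)
      = ((N.factorial : ℝ) * 2 ^ (2 * N)) * permR B := by
    have hpow : ∀ s s' : Fin N → Bool,
        (∑ j : Fin N, ∑ k : Fin N, B j k * sgnR (s' j) * sgnR (s k)) ^ N
          = ∑ f : Fin N → Fin N × Fin N,
              ∏ i, (B (f i).1 (f i).2 * sgnR (s' (f i).1) * sgnR (s (f i).2)) := by
      intro s s'
      have hq : (∑ q : Fin N × Fin N, B q.1 q.2 * sgnR (s' q.1) * sgnR (s q.2))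
          = ∑ j : Fin N, ∑ k : Fin N, B j k * sgnR (s' j) * sgnR (s k) := by
        exact Fintype.sum_prod_type _
      rw [← hq]
      exact Fintype.sum_pow _ N
    have hf : ∀ f : Fin N → Fin N × Fin N,
        (∑ s : Fin N → Bool, ∑ s' : Fin N → Bool,
            (∏ k : Fin N, sgnR (s k) * sgnR (s' k)) *
              ∏ i, (B (f i).1 (f i).2 * sgnR (s' (f i).1) * sgnR (s (f i).2)))
          = (∏ i, B (f i).1 (f i).2) *
              ((if Function.Bijective (fun i => (f i).2) then (2:ℝ)^N else 0) *
               (if Function.Bijective (fun i => (f i).1) then (2:ℝ)^N else 0)) := by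
      intro f
      have hterm : ∀ s s' : Fin N → Bool,
          (∏ k : Fin N, sgnR (s k) * sgnR (s' k)) *
              ∏ i, (B (f i).1 (f i).2 * sgnR (s' (f i).1) * sgnR (s (f i).2))
            = (∏ i, B (f i).1 (f i).2) *
                (((∏ k : Fin N, sgnR (s k)) * ∏ i, sgnR (s (f i).2)) *
                 ((∏ k : Fin N, sgnR (s' k)) * ∏ i, sgnR (s' (f i).1))) := by
        intro s s'
        rw [Finset.prod_mul_distrib, Finset.prod_mul_distrib, Finset.prod_mul_distrib]
        ring
      rw [Finset.sum_congr rfl fun s _ => Finset.sum_congr rfl fun s' _ => hterm s s']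
      have hS2 : (∑ s : Fin N → Bool, (∏ k : Fin N, sgnR (s k)) * ∏ i, sgnR (s (f i).2))
          = if Function.Bijective (fun i => (f i).2) then (2:ℝ)^N else 0 :=
        signSumAux N (fun i => (f i).2)
      have hS1 : (∑ s' : Fin N → Bool, (∏ k : Fin N, sgnR (s' k)) * ∏ i, sgnR (s' (f i).1))
          = if Function.Bijective (fun i => (f i).1) then (2:ℝ)^N else 0 :=
        signSumAux N (fun i => (f i).1)
      calc (∑ s : Fin N → Bool, ∑ s' : Fin N → Bool,
              (∏ i, B (f i).1 (f i).2) *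
                (((∏ k : Fin N, sgnR (s k)) * ∏ i, sgnR (s (f i).2)) *
                 ((∏ k : Fin N, sgnR (s' k)) * ∏ i, sgnR (s' (f i).1))))
          = ∑ s : Fin N → Bool,
              (∏ i, B (f i).1 (f i).2) *
                (((∏ k : Fin N, sgnR (s k)) * ∏ i, sgnR (s (f i).2)) *
                 (∑ s' : Fin N → Bool,
                   (∏ k : Fin N, sgnR (s' k)) * ∏ i, sgnR (s' (f i).1))) := by
            refine Finset.sum_congr rfl fun s _ => ?_
            rw [← Finset.mul_sum, ← Finset.mul_sum]
        _ = (∏ i, B (f i).1 (f i).2) *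
              ((∑ s : Fin N → Bool, (∏ k : Fin N, sgnR (s k)) * ∏ i, sgnR (s (f i).2)) *
               (∑ s' : Fin N → Bool,
                 (∏ k : Fin N, sgnR (s' k)) * ∏ i, sgnR (s' (f i).1))) := by
            rw [← Finset.mul_sum, ← Finset.sum_mul]
        _ = _ := by rw [hS1, hS2]
    calc (∑ s : Fin N → Bool, ∑ s' : Fin N → Bool,
            (∏ k : Fin N, sgnR (s k) * sgnR (s' k)) *
              (∑ j : Fin N, ∑ k : Fin N, B j k * sgnR (s' j) * sgnR (s k)) ^ N)
        = ∑ s : Fin N → Bool, ∑ s' : Fin N → Bool, ∑ f : Fin N → Fin N × Fin N,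
            (∏ k : Fin N, sgnR (s k) * sgnR (s' k)) *
              ∏ i, (B (f i).1 (f i).2 * sgnR (s' (f i).1) * sgnR (s (f i).2)) := by
          refine Finset.sum_congr rfl fun s _ => Finset.sum_congr rfl fun s' _ => ?_
          rw [hpow s s', Finset.mul_sum]
      _ = ∑ s : Fin N → Bool, ∑ f : Fin N → Fin N × Fin N, ∑ s' : Fin N → Bool,
            (∏ k : Fin N, sgnR (s k) * sgnR (s' k)) *
              ∏ i, (B (f i).1 (f i).2 * sgnR (s' (f i).1) * sgnR (s (f i).2)) := by
          exact Finset.sum_congr rfl fun s _ => Finset.sum_comm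
      _ = ∑ f : Fin N → Fin N × Fin N, ∑ s : Fin N → Bool, ∑ s' : Fin N → Bool,
            (∏ k : Fin N, sgnR (s k) * sgnR (s' k)) *
              ∏ i, (B (f i).1 (f i).2 * sgnR (s' (f i).1) * sgnR (s (f i).2)) :=
          Finset.sum_comm
      _ = ∑ f : Fin N → Fin N × Fin N,
            (∏ i, B (f i).1 (f i).2) *
              ((if Function.Bijective (fun i => (f i).2) then (2:ℝ)^N else 0) *
               (if Function.Bijective (fun i => (f i).1) then (2:ℝ)^N else 0)) :=
          Finset.sum_congr rfl fun f _ => hf f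
      _ = ∑ p : (Fin N → Fin N) × (Fin N → Fin N),
            (∏ i, B (p.1 i) (p.2 i)) *
              ((if Function.Bijective p.2 then (2:ℝ)^N else 0) *
               (if Function.Bijective p.1 then (2:ℝ)^N else 0)) :=
          Fintype.sum_equiv (Equiv.arrowProdEquivProdArrow (Fin N) (fun _ => Fin N) (fun _ => Fin N)) _ _
            (fun f => rfl)
      _ = ∑ g1 : Fin N → Fin N, ∑ g2 : Fin N → Fin N,
            (∏ i, B (g1 i) (g2 i)) *
              ((if Function.Bijective g2 then (2:ℝ)^N else 0) *
               (if Function.Bijective g1 then (2:ℝ)^N else 0)) :=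
          Fintype.sum_prod_type _
      _ = ∑ g1 : Fin N → Fin N,
            (if Function.Bijective g1 then
              (∑ g2 : Fin N → Fin N, if Function.Bijective g2 then
                (2:ℝ)^(2*N) * ∏ i, B (g1 i) (g2 i) else 0) else 0) := by
          refine Finset.sum_congr rfl fun g1 _ => ?_
          by_cases h1 : Function.Bijective g1
          · simp only [if_pos h1]
            refine Finset.sum_congr rfl fun g2 _ => ?_
            by_cases h2 : Function.Bijective g2
            · simp only [if_pos h2]; rw [two_mul, pow_add]; ring
            · simp only [if_neg h2]; ring
          · simp only [if_neg h1]
            exact Finset.sum_eq_zero fun g2 _ => by ring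
      _ = ∑ π : Equiv.Perm (Fin N), ∑ g2 : Fin N → Fin N,
            if Function.Bijective g2 then (2:ℝ)^(2*N) * ∏ i, B (π i) (g2 i) else 0 :=
          sum_bijfilter N _
      _ = ∑ π : Equiv.Perm (Fin N), ∑ τ : Equiv.Perm (Fin N),
            (2:ℝ)^(2*N) * ∏ i, B (π i) (τ i) :=
          Finset.sum_congr rfl fun π _ => sum_bijfilter N _
      _ = (2:ℝ)^(2*N) * ∑ π : Equiv.Perm (Fin N), ∑ τ : Equiv.Perm (Fin N),
            ∏ i, B (π i) (τ i) := by
          simp [Finset.mul_sum]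
      _ = ((N.factorial : ℝ) * 2 ^ (2 * N)) * permR B := by
          rw [sum_perm_perm]; unfold permR; ring
  rw [key]
  have hc : ((N.factorial : ℝ) * 2 ^ (2 * N)) ≠ 0 := by positivity
  field_simp
end
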